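/- There exist generators r_1,…,r_n of 𝕊. Moreover, for any generators r_1,…,r_n of 𝕊, the heights h(r_1),…,h(r_n) are pairwise distinct modulo n, and every element of 𝕊 admits a unique representation ∑_{j=1}^n S_j(z) r_j(z) with scalar polynomials S_j; that is, 𝕊 = 𝕄(r_1) ∔ ⋯ ∔ 𝕄(r_n). -/

import Mathlib

open Polynomial Matrix

/-- The height of an `n`-dimensional vector polynomial. -/
noncomputable def vheight (n : ℕ) (r : Fin n → Polynomial ℂ) : WithBot ℕ :=
  Finset.univ.sup fun j : Fin n => n • (r j).degree + ((j : ℕ) : WithBot ℕ)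

/-- The class `𝓜(n,N)` of band symmetric matrices with degeneration indices `m`. -/
structure MatrixClassM (n N : ℕ) (A : Matrix (Fin N) (Fin N) ℝ) (m : ℕ → ℕ) : Prop where
  symm : A.IsSymm
  band : ∀ k l : Fin N, (n : ℤ) < |(k : ℤ) - (l : ℤ)| → A k l = 0
  m_zero : m 0 = 0
  m_last : m n = N
  m_mono : ∀ j < n, m j < m (j + 1)
  m_one : 1 < m 1
  m_le : ∀ j, 1 ≤ j → j ≤ n → m j ≤ N - n + j
  d_pos : ∀ j < n, ∀ k l : Fin N, (l : ℕ) = (k : ℕ) + (n - j) →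
      m j < (k : ℕ) + 1 → (k : ℕ) + 1 < m (j + 1) → 0 < A l k
  d_zero : ∀ j < n, ∀ k l : Fin N, (l : ℕ) = (k : ℕ) + (n - j) →
      m (j + 1) ≤ (k : ℕ) + 1 → (k : ℕ) + 1 ≤ N - n + j → A l k = 0

/-- The rank-one jump matrix `σ_k`. -/
def sigmaJump {n N : ℕ} (αc : Fin N → Fin n → ℂ) (k : Fin N) :
    Matrix (Fin n) (Fin n) ℂ :=
  Matrix.of fun i j => (starRingEnd ℂ) (αc k i) * αc k j

/-- The inner product `⟨r,s⟩_{L²(σ)}` for vector polynomials. -/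
noncomputable def L2inner {n N : ℕ} (x : Fin N → ℝ)
    (σ : Fin N → Matrix (Fin n) (Fin n) ℂ) (r s : Fin n → Polynomial ℂ) : ℂ :=
  ∑ k, ∑ i, ∑ j,
    (starRingEnd ℂ) ((r i).eval ((x k : ℂ))) * σ k i j * (s j).eval ((x k : ℂ))

/-- The interpolation set `𝕊`. -/
def interpSet {n N : ℕ} (z : Fin N → ℂ) (α : Fin N → Fin n → ℂ) :
    Set (Fin n → Polynomial ℂ) :=
  {r | ∀ k, ∑ j, α k j * (r j).eval (z k) = 0}

/-- `𝕄(r_1) + ⋯ + 𝕄(r_m)`. -/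
def polySpan {n m : ℕ} (r : Fin m → Fin n → Polynomial ℂ) :
    Set (Fin n → Polynomial ℂ) :=
  {s | ∃ c : Fin m → Polynomial ℂ, s = fun jj => ∑ i, c i * r i jj}

/-- `𝕄(r_1) + ⋯ + 𝕄(r_{j-1})`. -/
def prevSpan {n : ℕ} (r : Fin n → Fin n → Polynomial ℂ) (j : Fin n) :
    Set (Fin n → Polynomial ℂ) :=
  {s | ∃ c : Fin n → Polynomial ℂ,
      s = fun jj => ∑ i ∈ Finset.univ.filter (fun i => i < j), c i * r i jj}

/-- `r` is a sequence of generators of `S`. -/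
def IsGenSeq {n : ℕ} (S : Set (Fin n → Polynomial ℂ))
    (r : Fin n → Fin n → Polynomial ℂ) : Prop :=
  ∀ j : Fin n, r j ≠ 0 ∧ r j ∈ S \ prevSpan r j ∧
    ∀ s ∈ S \ prevSpan r j, s ≠ 0 → vheight n (r j) ≤ vheight n s

/- ============================ auxiliary theory ============================ -/

namespace Stmt7Aux

/-- The embedding of vector polynomials into scalar polynomials:
`Φ(r) = ∑ⱼ Rⱼ(Xⁿ)·Xʲ`.  Its degree equals the height. -/
noncomputable def Phi (n : ℕ) (r : Fin n → Polynomial ℂ) : Polynomial ℂ :=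
  ∑ j : Fin n, expand ℂ n (r j) * X ^ (j : ℕ)

lemma coeff_Phi {n : ℕ} (hn : 0 < n) (r : Fin n → Polynomial ℂ) (m : ℕ) :
    (Phi n r).coeff m = (r ⟨m % n, Nat.mod_lt _ hn⟩).coeff (m / n) := by
  unfold Phi
  rw [finset_sum_coeff]
  rw [Finset.sum_eq_single (⟨m % n, Nat.mod_lt _ hn⟩ : Fin n)]
  · rw [coeff_mul_X_pow', if_pos (Nat.mod_le m n)]
    have hdvd : n ∣ m - m % n := by
      have := Nat.div_add_mod m n
      exact ⟨m / n, by omega⟩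
    rw [coeff_expand hn, if_pos hdvd]
    congr 1
    have := Nat.div_add_mod m n
    have h2 : m - m % n = n * (m / n) := by omega
    rw [h2, Nat.mul_div_cancel_left _ hn]
  · intro j _ hj
    rw [coeff_mul_X_pow']
    by_cases hle : (j : ℕ) ≤ m
    · rw [if_pos hle, coeff_expand hn]
      rw [if_neg]
      intro ⟨t, ht⟩
      apply hj
      have hjn := j.isLt
      have : m % n = (j : ℕ) := by
        have : m = n * t + (j : ℕ) := by omega
        rw [this, Nat.mul_add_mod]
        exact Nat.mod_eq_of_lt hjn
      exact Fin.ext this.symm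
    · rw [if_neg hle]
  · intro h; exact absurd (Finset.mem_univ _) h

lemma Phi_eq_zero {n : ℕ} (hn : 0 < n) (r : Fin n → Polynomial ℂ) :
    Phi n r = 0 ↔ r = 0 := by
  constructor
  · intro h
    funext j
    ext d
    have hcoeff : (Phi n r).coeff (n * d + (j : ℕ)) = 0 := by rw [h]; simp
    rw [coeff_Phi hn] at hcoeff
    have h1 : (n * d + (j : ℕ)) % n = (j : ℕ) := by
      rw [Nat.mul_add_mod]; exact Nat.mod_eq_of_lt j.isLt
    have h2 : (n * d + (j : ℕ)) / n = d := by
      rw [add_comm, Nat.add_mul_div_left _ _ hn, Nat.div_eq_of_lt j.isLt]; omega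
    rw [show (⟨(n * d + (j:ℕ)) % n, Nat.mod_lt _ hn⟩ : Fin n) = j from Fin.ext h1,
      h2] at hcoeff
    simpa using hcoeff
  · intro h; subst h; unfold Phi; simp

lemma Phi_ne_zero {n : ℕ} (hn : 0 < n) {r : Fin n → Polynomial ℂ} (h : r ≠ 0) :
    Phi n r ≠ 0 := fun h0 => h ((Phi_eq_zero hn r).mp h0)

lemma Phi_sub {n : ℕ} (r s : Fin n → Polynomial ℂ) :
    Phi n (r - s) = Phi n r - Phi n s := by
  unfold Phi
  rw [← Finset.sum_sub_distrib]
  congr 1; funext j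
  simp [sub_mul]

lemma Phi_sum {n : ℕ} {ι : Type*} (F : Finset ι) (c : ι → Polynomial ℂ)
    (g : ι → Fin n → Polynomial ℂ) :
    Phi n (fun jj => ∑ i ∈ F, c i * g i jj) =
      ∑ i ∈ F, expand ℂ n (c i) * Phi n (g i) := by
  unfold Phi
  have : ∀ i ∈ F, expand ℂ n (c i) * ∑ j : Fin n, expand ℂ n (g i j) * X ^ (j:ℕ)
      = ∑ j : Fin n, expand ℂ n (c i) * expand ℂ n (g i j) * X ^ (j:ℕ) := by
    intro i _
    rw [Finset.mul_sum]
    congr 1; funext j; ring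
  rw [Finset.sum_congr rfl this, Finset.sum_comm]
  congr 1; funext j
  rw [← Finset.sum_mul]
  congr 1
  rw [map_sum]
  congr 1; funext i
  rw [_root_.map_mul]

lemma Phi_smul {n : ℕ} (p : Polynomial ℂ) (r : Fin n → Polynomial ℂ) :
    Phi n (fun jj => p * r jj) = expand ℂ n p * Phi n r := by
  unfold Phi
  rw [Finset.mul_sum]
  congr 1; funext j
  rw [_root_.map_mul, mul_assoc]

lemma nsmul_coe (m d : ℕ) : m • ((d:ℕ) : WithBot ℕ) = ((m*d : ℕ) : WithBot ℕ) := by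
  simp [nsmul_eq_mul]

lemma nsmul_bot (m : ℕ) (hm : 0 < m) : m • (⊥ : WithBot ℕ) = ⊥ := by
  cases m with
  | zero => omega
  | succ k => rw [succ_nsmul]; simp

lemma vheight_eq_degree_Phi {n : ℕ} (hn : 0 < n) (r : Fin n → Polynomial ℂ) :
    vheight n r = (Phi n r).degree := by
  apply le_antisymm
  · apply Finset.sup_le
    intro j _
    by_cases h : r j = 0
    · rw [h, degree_zero, nsmul_bot n hn]
      simp
    · rw [degree_eq_natDegree h, nsmul_coe, ← Nat.cast_add]
      apply le_degree_of_ne_zero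
      rw [coeff_Phi hn]
      have h1 : (n * (r j).natDegree + (j : ℕ)) % n = (j : ℕ) := by
        rw [Nat.mul_add_mod]; exact Nat.mod_eq_of_lt j.isLt
      have h2 : (n * (r j).natDegree + (j : ℕ)) / n = (r j).natDegree := by
        rw [add_comm, Nat.add_mul_div_left _ _ hn, Nat.div_eq_of_lt j.isLt]; omega
      rw [show (⟨(n * (r j).natDegree + (j:ℕ)) % n, Nat.mod_lt _ hn⟩ : Fin n) = j from
        Fin.ext h1, h2]
      exact mt leadingCoeff_eq_zero.mp h
  · rw [degree_le_iff_coeff_zero]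
    intro m hm
    by_contra hc
    rw [coeff_Phi hn] at hc
    set j0 : Fin n := ⟨m % n, Nat.mod_lt _ hn⟩
    have h1 : ((m / n : ℕ) : WithBot ℕ) ≤ (r j0).degree := le_degree_of_ne_zero hc
    have h2 : ((m : ℕ) : WithBot ℕ) ≤ n • (r j0).degree + ((j0 : ℕ) : WithBot ℕ) := by
      calc ((m : ℕ) : WithBot ℕ) = ((n * (m / n) + m % n : ℕ) : WithBot ℕ) := by
            rw [Nat.div_add_mod]
        _ = n • ((m / n : ℕ) : WithBot ℕ) + ((m % n : ℕ) : WithBot ℕ) := by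
            rw [nsmul_coe, Nat.cast_add]
        _ ≤ n • (r j0).degree + ((j0 : ℕ) : WithBot ℕ) := by
            refine add_le_add ?_ le_rfl
            exact nsmul_le_nsmul_right h1 n
    have h3 : n • (r j0).degree + ((j0 : ℕ) : WithBot ℕ) ≤ vheight n r :=
      Finset.le_sup (f := fun j : Fin n => n • (r j).degree + ((j : ℕ) : WithBot ℕ))
        (Finset.mem_univ j0)
    exact absurd (le_trans h2 h3) (not_le.mpr hm)

/-- The reduction step: cancel leading terms of scalar polynomials whose
degrees agree mod `n`. -/
lemma reduce_step {n : ℕ} (hn : 0 < n) (p q : Polynomial ℂ) (hq : q ≠ 0)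
    (hle : q.degree ≤ p.degree) (hmod : p.natDegree % n = q.natDegree % n) :
    ∃ (c : ℂ) (d : ℕ), (p - C c * X ^ (n * d) * q).degree < p.degree := by
  have hp : p ≠ 0 := by
    intro h; rw [h, degree_zero, le_bot_iff, degree_eq_bot] at hle; exact hq hle
  have hqd : q.natDegree ≤ p.natDegree := natDegree_le_natDegree hle
  refine ⟨p.leadingCoeff / q.leadingCoeff, (p.natDegree - q.natDegree) / n, ?_⟩
  set c := p.leadingCoeff / q.leadingCoeff with hc
  have hc0 : c ≠ 0 := div_ne_zero (mt leadingCoeff_eq_zero.mp hp) (mt leadingCoeff_eq_zero.mp hq)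
  have hdvd : n ∣ p.natDegree - q.natDegree := by
    exact Nat.dvd_of_mod_eq_zero (Nat.sub_mod_eq_zero_of_mod_eq hmod)
  have hnd : n * ((p.natDegree - q.natDegree) / n) = p.natDegree - q.natDegree :=
    Nat.mul_div_cancel' hdvd
  set e := n * ((p.natDegree - q.natDegree) / n) with he
  have hmain : (C c * X ^ e * q).degree = p.degree := by
    rw [degree_mul, degree_mul, degree_C hc0, zero_add, degree_X_pow,
      degree_eq_natDegree hq, degree_eq_natDegree hp, ← Nat.cast_add]
    congr 1
    omega
  have hlead : (C c * X ^ e * q).leadingCoeff = p.leadingCoeff := by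
    rw [leadingCoeff_mul, leadingCoeff_mul, leadingCoeff_C, leadingCoeff_X_pow, mul_one]
    rw [hc]
    rw [div_mul_cancel₀]
    exact mt leadingCoeff_eq_zero.mp hq
  exact degree_sub_lt hmain.symm hp hlead.symm

lemma expand_C_mul_X_pow {n : ℕ} (c : ℂ) (d : ℕ) :
    expand ℂ n (C c * X ^ d) = C c * X ^ (n * d) := by
  rw [_root_.map_mul, map_pow, expand_X, expand_C, ← pow_mul]

/-- The key degree computation for a combination `∑ cᵢ·gᵢ` where the `gᵢ` have
pairwise distinct residues of heights mod `n`. -/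
lemma span_sum_key {n : ℕ} (hn : 0 < n) (g : Fin n → Fin n → Polynomial ℂ)
    (F : Finset (Fin n)) (hg0 : ∀ i ∈ F, g i ≠ 0)
    (hres : ∀ i ∈ F, ∀ i' ∈ F, i ≠ i' →
      (Phi n (g i)).natDegree % n ≠ (Phi n (g i')).natDegree % n)
    (c : Fin n → Polynomial ℂ) (i1 : Fin n) (hi1 : i1 ∈ F) (hc1 : c i1 ≠ 0) :
    ∃ i0 ∈ F, c i0 ≠ 0 ∧ (fun jj => ∑ i ∈ F, c i * g i jj) ≠ 0 ∧
      (Phi n (fun jj => ∑ i ∈ F, c i * g i jj)).natDegree % n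
        = (Phi n (g i0)).natDegree % n := by
  classical
  set s := fun jj => ∑ i ∈ F, c i * g i jj with hs
  set P := fun i => expand ℂ n (c i) * Phi n (g i) with hP
  set F' := F.filter (fun i => c i ≠ 0) with hF'
  have hi1' : i1 ∈ F' := Finset.mem_filter.mpr ⟨hi1, hc1⟩
  have hP0 : ∀ i ∈ F', P i ≠ 0 := by
    intro i hi
    rw [Finset.mem_filter] at hi
    exact mul_ne_zero ((expand_ne_zero hn).mpr hi.2)
      (fun h => hg0 i hi.1 ((Phi_eq_zero hn _).mp h))
  have hΦ : Phi n s = ∑ i ∈ F', P i := by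
    rw [hs, Phi_sum]
    rw [hF', Finset.sum_filter_of_ne]
    intro i _ hne
    intro hc0
    exact hne (by simp [hP, hc0])
  have resP : ∀ i ∈ F', (P i).natDegree % n = (Phi n (g i)).natDegree % n := by
    intro i hi
    rw [Finset.mem_filter] at hi
    have h1 : expand ℂ n (c i) ≠ 0 := (expand_ne_zero hn).mpr hi.2
    have h2 : Phi n (g i) ≠ 0 := fun h => hg0 i hi.1 ((Phi_eq_zero hn _).mp h)
    rw [hP, natDegree_mul h1 h2, natDegree_expand, add_comm, Nat.add_mul_mod_self_right]
  obtain ⟨i0, hi0, hmax⟩ := F'.exists_max_image (fun i => (P i).degree) ⟨i1, hi1'⟩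
  have hstrict : ∀ i ∈ F', i ≠ i0 → (P i).degree < (P i0).degree := by
    intro i hi hne
    refine lt_of_le_of_ne (hmax i hi) ?_
    intro heq
    have hnd : (P i).natDegree = (P i0).natDegree := natDegree_eq_of_degree_eq heq
    have := hres i (Finset.mem_of_mem_filter _ hi) i0 (Finset.mem_of_mem_filter _ hi0) hne
    rw [← resP i hi, ← resP i0 hi0, hnd] at this
    exact this rfl
  have hbot : (⊥ : WithBot ℕ) < (P i0).degree :=
    Ne.bot_lt' (fun h => hP0 i0 hi0 (degree_eq_bot.mp h.symm))
  have hrest : (∑ i ∈ F'.erase i0, P i).degree < (P i0).degree := by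
    refine lt_of_le_of_lt (degree_sum_le _ _) ?_
    rw [Finset.sup_lt_iff hbot]
    intro i hi
    exact hstrict i (Finset.mem_of_mem_erase hi) (Finset.ne_of_mem_erase hi)
  have hsum : Phi n s = P i0 + ∑ i ∈ F'.erase i0, P i := by
    rw [hΦ, Finset.add_sum_erase _ _ hi0]
  have hdeg : (Phi n s).degree = (P i0).degree := by
    rw [hsum]; exact degree_add_eq_left_of_degree_lt hrest
  have hsne : Phi n s ≠ 0 := by
    intro h; rw [h, degree_zero] at hdeg; exact absurd hdeg.symm (ne_of_gt hbot)
  refine ⟨i0, Finset.mem_of_mem_filter _ hi0, (Finset.mem_filter.mp hi0).2,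
    fun h => hsne ((Phi_eq_zero hn s).mpr h), ?_⟩
  rw [natDegree_eq_of_degree_eq hdeg, resP i0 hi0]

/- ------------------------ span bookkeeping lemmas ------------------------ -/

lemma zero_mem_prevSpan {n : ℕ} (r : Fin n → Fin n → Polynomial ℂ) (j : Fin n) :
    0 ∈ prevSpan r j := by
  refine ⟨0, ?_⟩
  funext jj
  simp

lemma prevSpan_congr {n : ℕ} {r r' : Fin n → Fin n → Polynomial ℂ} (j : Fin n)
    (h : ∀ i : Fin n, i < j → r i = r' i) : prevSpan r j = prevSpan r' j := by
  have key : ∀ (c : Fin n → Polynomial ℂ) (jj : Fin n),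
      ∑ i ∈ Finset.univ.filter (fun i => i < j), c i * r i jj
        = ∑ i ∈ Finset.univ.filter (fun i => i < j), c i * r' i jj := by
    intro c jj
    apply Finset.sum_congr rfl
    intro i hi
    rw [h i (Finset.mem_filter.mp hi).2]
  ext s
  constructor
  · rintro ⟨c, rfl⟩
    exact ⟨c, by funext jj; exact key c jj⟩
  · rintro ⟨c, rfl⟩
    exact ⟨c, by funext jj; exact (key c jj).symm⟩

lemma prevSpan_mono {n : ℕ} (r : Fin n → Fin n → Polynomial ℂ) {j1 j2 : Fin n}
    (h : j1 ≤ j2) : prevSpan r j1 ⊆ prevSpan r j2 := by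
  rintro s ⟨c, rfl⟩
  refine ⟨fun i => if i < j1 then c i else 0, ?_⟩
  funext jj
  rw [show (∑ i ∈ Finset.univ.filter (fun i => i < j2),
      (if i < j1 then c i else 0) * r i jj)
    = ∑ i ∈ Finset.univ.filter (fun i => i < j2),
      (if i < j1 then c i * r i jj else 0) from
    Finset.sum_congr rfl (fun i _ => by rw [ite_mul, zero_mul])]
  rw [← Finset.sum_filter]
  congr 1
  ext i
  simp only [Finset.mem_filter, Finset.mem_univ, true_and]
  constructor
  · intro h1; exact ⟨lt_of_lt_of_le h1 h, h1⟩
  · rintro ⟨-, h2⟩; exact h2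

lemma prevSpan_add_mul_mem {n : ℕ} (r : Fin n → Fin n → Polynomial ℂ) {j i : Fin n}
    (hij : i < j) {s : Fin n → Polynomial ℂ} (hs : s ∈ prevSpan r j)
    (p : Polynomial ℂ) : (fun jj => s jj + p * r i jj) ∈ prevSpan r j := by
  obtain ⟨c, rfl⟩ := hs
  refine ⟨fun i' => c i' + (if i' = i then p else 0), ?_⟩
  funext jj
  rw [show (∑ i' ∈ Finset.univ.filter (fun i' => i' < j),
      (c i' + if i' = i then p else 0) * r i' jj)
    = (∑ i' ∈ Finset.univ.filter (fun i' => i' < j), c i' * r i' jj)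
      + ∑ i' ∈ Finset.univ.filter (fun i' => i' < j),
          (if i' = i then p else 0) * r i' jj from by
    rw [← Finset.sum_add_distrib]
    exact Finset.sum_congr rfl (fun i' _ => by ring)]
  congr 1
  have hmem : i ∈ Finset.univ.filter (fun i' => i' < j) :=
    Finset.mem_filter.mpr ⟨Finset.mem_univ i, hij⟩
  rw [Finset.sum_eq_single_of_mem (f := fun i' => (if i' = i then p else 0) * r i' jj) i hmem
      (fun i' _ hne => by rw [if_neg hne, zero_mul]), if_pos rfl]

lemma prevSpan_subset_polySpan {n : ℕ} (r : Fin n → Fin n → Polynomial ℂ) (j : Fin n) :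
    prevSpan r j ⊆ polySpan r := by
  rintro s ⟨c, rfl⟩
  refine ⟨fun i => if i < j then c i else 0, ?_⟩
  funext jj
  rw [show (∑ i : Fin n, (if i < j then c i else 0) * r i jj)
    = ∑ i : Fin n, (if i < j then c i * r i jj else 0) from
    Finset.sum_congr rfl (fun i _ => by rw [ite_mul, zero_mul])]
  rw [← Finset.sum_filter]

lemma polySpan_add_mul_mem {n : ℕ} (r : Fin n → Fin n → Polynomial ℂ) (i : Fin n)
    {s : Fin n → Polynomial ℂ} (hs : s ∈ polySpan r)
    (p : Polynomial ℂ) : (fun jj => s jj + p * r i jj) ∈ polySpan r := by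
  obtain ⟨c, rfl⟩ := hs
  refine ⟨fun i' => c i' + (if i' = i then p else 0), ?_⟩
  funext jj
  rw [show (∑ i' : Fin n, (c i' + if i' = i then p else 0) * r i' jj)
    = (∑ i' : Fin n, c i' * r i' jj)
      + ∑ i' : Fin n, (if i' = i then p else 0) * r i' jj from by
    rw [← Finset.sum_add_distrib]
    exact Finset.sum_congr rfl (fun i' _ => by ring)]
  congr 1
  rw [Finset.sum_eq_single_of_mem (f := fun i' => (if i' = i then p else 0) * r i' jj) i
      (Finset.mem_univ i) (fun i' _ hne => by rw [if_neg hne, zero_mul]), if_pos rfl]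

lemma polySpan_single_mem {n : ℕ} (r : Fin n → Fin n → Polynomial ℂ) (i : Fin n)
    (p : Polynomial ℂ) : (fun jj => p * r i jj) ∈ polySpan r := by
  have h0 : (0 : Fin n → Polynomial ℂ) ∈ polySpan r := ⟨0, by funext jj; simp⟩
  have := polySpan_add_mul_mem r i h0 p
  simpa using this

/- ------------------------ generator condition ------------------------ -/

/-- The generator condition at index `j` (component of `IsGenSeq`). -/
def GenCond {n : ℕ} (S : Set (Fin n → Polynomial ℂ))
    (r : Fin n → Fin n → Polynomial ℂ) (j : Fin n) : Prop :=
  r j ≠ 0 ∧ r j ∈ S \ prevSpan r j ∧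
    ∀ s ∈ S \ prevSpan r j, s ≠ 0 → vheight n (r j) ≤ vheight n s

/-- Closure of `S` under `(s,t) ↦ s − p·t`. -/
def SClosed {n : ℕ} (S : Set (Fin n → Polynomial ℂ)) : Prop :=
  ∀ s ∈ S, ∀ t ∈ S, ∀ p : Polynomial ℂ, (fun jj => s jj - p * t jj) ∈ S

lemma distinct_res {n : ℕ} (hn : 0 < n) {S : Set (Fin n → Polynomial ℂ)}
    (hS : SClosed S) {r : Fin n → Fin n → Polynomial ℂ} {j1 j2 : Fin n}
    (h12 : j1 < j2) (h1 : GenCond S r j1) (h2 : GenCond S r j2) :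
    (Phi n (r j1)).natDegree % n ≠ (Phi n (r j2)).natDegree % n := by
  intro heq
  obtain ⟨hne1, ⟨hS1, hp1⟩, hmin1⟩ := h1
  obtain ⟨hne2, ⟨hS2, hp2⟩, hmin2⟩ := h2
  have hnp12 : r j2 ∉ prevSpan r j1 := fun h => hp2 (prevSpan_mono r h12.le h)
  have hle : vheight n (r j1) ≤ vheight n (r j2) := hmin1 _ ⟨hS2, hnp12⟩ hne2
  rw [vheight_eq_degree_Phi hn, vheight_eq_degree_Phi hn] at hle
  obtain ⟨c, d, hred⟩ := reduce_step hn (Phi n (r j2)) (Phi n (r j1))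
    (Phi_ne_zero hn hne1) hle heq.symm
  set m : Polynomial ℂ := C c * X ^ d with hm
  set s' : Fin n → Polynomial ℂ := fun jj => r j2 jj - m * r j1 jj with hs'
  have hPhis' : Phi n s' = Phi n (r j2) - C c * X ^ (n * d) * Phi n (r j1) := by
    have : s' = r j2 - fun jj => m * r j1 jj := by funext jj; simp [hs']
    rw [this, Phi_sub, Phi_smul, hm, expand_C_mul_X_pow]
  have hs'S : s' ∈ S := hS _ hS2 _ hS1 m
  have hs'np : s' ∉ prevSpan r j2 := by
    intro hmem
    apply hp2
    have : r j2 = fun jj => s' jj + m * r j1 jj := by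
      funext jj; simp [hs']
    rw [this]
    exact prevSpan_add_mul_mem r h12 hmem m
  have hs'ne : s' ≠ 0 := by
    intro h0
    exact hs'np (h0 ▸ zero_mem_prevSpan r j2)
  have := hmin2 s' ⟨hs'S, hs'np⟩ hs'ne
  rw [vheight_eq_degree_Phi hn, vheight_eq_degree_Phi hn, hPhis'] at this
  exact absurd (lt_of_le_of_lt this hred) (lt_irrefl _)

/-- Residues of the heights, as a function to `Fin n`. -/
noncomputable def resFn {n : ℕ} (hn : 0 < n) (r : Fin n → Fin n → Polynomial ℂ) (i : Fin n) : Fin n :=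
  ⟨(Phi n (r i)).natDegree % n, Nat.mod_lt _ hn⟩

lemma resFn_injective {n : ℕ} (hn : 0 < n) {S : Set (Fin n → Polynomial ℂ)}
    (hS : SClosed S) {r : Fin n → Fin n → Polynomial ℂ}
    (hgen : IsGenSeq S r) : Function.Injective (resFn hn r) := by
  intro i1 i2 h
  by_contra hne
  have hval : (Phi n (r i1)).natDegree % n = (Phi n (r i2)).natDegree % n :=
    congrArg Fin.val h
  rcases lt_or_gt_of_ne hne with hlt | hlt
  · exact distinct_res hn hS hlt (hgen i1) (hgen i2) hval
  · exact distinct_res hn hS hlt (hgen i2) (hgen i1) hval.symm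

/- ------------------------ existence of generators ------------------------ -/

lemma exists_genSeq {n : ℕ} (hn : 0 < n) {S : Set (Fin n → Polynomial ℂ)}
    (hS : SClosed S) (P : Polynomial ℂ) (hP : P ≠ 0)
    (hPS : ∀ i0 : Fin n, (fun jj => if jj = i0 then P else 0) ∈ S) :
    ∃ r : Fin n → Fin n → Polynomial ℂ, IsGenSeq S r := by
  classical
  have claim : ∀ m : ℕ, m ≤ n →
      ∃ r : Fin n → Fin n → Polynomial ℂ, ∀ i : Fin n, (i : ℕ) < m → GenCond S r i := by
    intro m
    induction m with
    | zero => exact fun _ => ⟨0, fun i hi => absurd hi (by omega)⟩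
    | succ m IH =>
      intro hm1
      obtain ⟨r, hr⟩ := IH (by omega)
      set jf : Fin n := ⟨m, by omega⟩ with hjf
      -- the partial generators below `jf` satisfy GenCond
      have hrGC : ∀ i : Fin n, i < jf → GenCond S r i := by
        intro i hi
        exact hr i hi
      -- residues of the partial generators
      set Fi : Finset (Fin n) :=
        (Finset.univ.filter (fun i => i < jf)).image (resFn hn r) with hFi
      have hFicard : Fi.card < n := by
        have h1 : (Finset.univ.filter (fun i : Fin n => i < jf)) ⊆ Finset.univ.erase jf := by
          intro i hi
          exact Finset.mem_erase.mpr ⟨ne_of_lt (Finset.mem_filter.mp hi).2, Finset.mem_univ i⟩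
        calc Fi.card ≤ (Finset.univ.filter (fun i : Fin n => i < jf)).card :=
              Finset.card_image_le
          _ ≤ (Finset.univ.erase jf).card := Finset.card_le_card h1
          _ = n - 1 := by
              rw [Finset.card_erase_of_mem (Finset.mem_univ jf), Finset.card_univ,
                Fintype.card_fin]
          _ < n := by omega
      obtain ⟨i0, hi0⟩ : ∃ i0 : Fin n, i0 ∉ Fi := by
        by_contra h
        push_neg at h
        have : Fi = Finset.univ := Finset.eq_univ_iff_forall.mpr h
        rw [this, Finset.card_univ, Fintype.card_fin] at hFicard
        omega
      -- the candidate element of `S \ prevSpan r jf`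
      set e : Fin n → Polynomial ℂ := fun jj => if jj = i0 then P else 0 with he
      have heS : e ∈ S := hPS i0
      have hene : e ≠ 0 := by
        intro h0
        have := congrFun h0 i0
        simp [he] at this
        exact hP this
      have hPhie : Phi n e = expand ℂ n P * X ^ (i0 : ℕ) := by
        unfold Phi
        rw [Finset.sum_eq_single_of_mem i0 (Finset.mem_univ i0)]
        · rw [he]; simp
        · intro j _ hne
          rw [he]
          simp [hne]
      have hrese : (Phi n e).natDegree % n = (i0 : ℕ) := by
        rw [hPhie, natDegree_mul ((expand_ne_zero hn).mpr hP) (pow_ne_zero _ X_ne_zero),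
          natDegree_expand, natDegree_X_pow, add_comm, Nat.add_mul_mod_self_right,
          Nat.mod_eq_of_lt i0.isLt]
      have henp : e ∉ prevSpan r jf := by
        rintro ⟨c, hc⟩
        by_cases hall : ∀ i ∈ Finset.univ.filter (fun i : Fin n => i < jf), c i = 0
        · apply hene
          rw [hc]
          funext jj
          rw [Finset.sum_eq_zero (fun i hi => by rw [hall i hi, zero_mul])]
          rfl
        · push_neg at hall
          obtain ⟨i1, hi1, hc1⟩ := hall
          obtain ⟨i0', hi0'F, -, -, hres'⟩ := span_sum_key hn r
            (Finset.univ.filter (fun i : Fin n => i < jf))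
            (fun i hi => (hrGC i (Finset.mem_filter.mp hi).2).1)
            (fun i hi i' hi' hne => by
              rcases lt_or_gt_of_ne hne with hlt | hlt
              · exact distinct_res hn hS hlt (hrGC i (Finset.mem_filter.mp hi).2)
                  (hrGC i' (Finset.mem_filter.mp hi').2)
              · exact fun hv => (distinct_res hn hS hlt
                  (hrGC i' (Finset.mem_filter.mp hi').2)
                  (hrGC i (Finset.mem_filter.mp hi).2)) hv.symm)
            c i1 hi1 hc1
          rw [← hc] at hres'
          apply hi0
          rw [hFi]
          refine Finset.mem_image.mpr ⟨i0', hi0'F, ?_⟩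
          apply Fin.ext
          show (Phi n (r i0')).natDegree % n = (i0 : ℕ)
          rw [← hres', hrese]
      -- pick an element of minimal height
      have hexm : ∃ mm : ℕ, ∃ s, (s ∈ S \ prevSpan r jf) ∧ (Phi n s).natDegree = mm :=
        ⟨(Phi n e).natDegree, e, ⟨heS, henp⟩, rfl⟩
      obtain ⟨s0, hs0mem, hs0deg⟩ := Nat.find_spec hexm
      have hs0min : ∀ s, s ∈ S \ prevSpan r jf → (Phi n s0).natDegree ≤ (Phi n s).natDegree := by
        intro s hs
        rw [hs0deg]
        exact Nat.find_min' hexm ⟨s, hs, rfl⟩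
      have hs0ne : s0 ≠ 0 := by
        intro h0
        exact hs0mem.2 (h0 ▸ zero_mem_prevSpan r jf)
      -- update
      set r' := Function.update r jf s0 with hr'
      have hagree : ∀ i : Fin n, i < jf → r i = r' i := by
        intro i hi
        rw [hr', Function.update_of_ne (ne_of_lt hi)]
      refine ⟨r', ?_⟩
      intro i hi
      by_cases hilt : (i : ℕ) < m
      · have hiltf : i < jf := hilt
        have hGC := hrGC i hiltf
        have hps : prevSpan r i = prevSpan r' i :=
          prevSpan_congr i (fun i' hi' => hagree i' (lt_trans hi' hiltf))
        have hri : r' i = r i := by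
          rw [hr', Function.update_of_ne (ne_of_lt hiltf)]
        refine ⟨by rw [hri]; exact hGC.1, by rw [hri, ← hps]; exact hGC.2.1, ?_⟩
        intro s hs hsne
        have hs2 : s ∈ S \ prevSpan r i := by rw [hps]; exact hs
        have := hGC.2.2 s hs2 hsne
        rw [hri]
        exact this
      · have hieq : i = jf := by
          apply Fin.ext
          show (i : ℕ) = m
          omega
        have hps : prevSpan r i = prevSpan r' i :=
          prevSpan_congr i (fun i' hi' => hagree i' (hieq ▸ hi'))
        have hri : r' i = s0 := by rw [hr', hieq, Function.update_self]
        have hs0mem' : s0 ∈ S \ prevSpan r i := by rw [hieq]; exact hs0mem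
        have hs0min' : ∀ s, s ∈ S \ prevSpan r i → (Phi n s0).natDegree ≤ (Phi n s).natDegree := by
          intro s hs
          apply hs0min
          rw [← hieq]
          exact hs
        refine ⟨by rw [hri]; exact hs0ne, by rw [hri, ← hps]; exact hs0mem', ?_⟩
        intro s hs hsne
        have hs2 : s ∈ S \ prevSpan r i := by rw [hps]; exact hs
        rw [hri, vheight_eq_degree_Phi hn, vheight_eq_degree_Phi hn,
          degree_eq_natDegree (Phi_ne_zero hn hs0ne), degree_eq_natDegree (Phi_ne_zero hn hsne),
          Nat.cast_le]
        exact hs0min' s hs2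
  obtain ⟨r, hr⟩ := claim n le_rfl
  exact ⟨r, fun j => hr j j.isLt⟩

/- ------------------------ spanning and uniqueness ------------------------ -/

lemma genSeq_spans {n : ℕ} (hn : 0 < n) {S : Set (Fin n → Polynomial ℂ)}
    (hS : SClosed S) {r : Fin n → Fin n → Polynomial ℂ}
    (hgen : IsGenSeq S r) : ∀ s ∈ S, s ∈ polySpan r := by
  classical
  have hsurj : Function.Surjective (resFn hn r) :=
    Finite.surjective_of_injective (resFn_injective hn hS hgen)
  have main : ∀ m : ℕ, ∀ s ∈ S, (Phi n s).natDegree ≤ m → s ∈ polySpan r := by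
    intro m
    induction m using Nat.strong_induction_on with
    | _ m IH =>
      intro s hsS hdeg
      by_cases hs0 : s = 0
      · exact hs0 ▸ ⟨0, by funext jj; simp⟩
      obtain ⟨i0, hi0⟩ := hsurj ⟨(Phi n s).natDegree % n, Nat.mod_lt _ hn⟩
      by_cases hprev : s ∈ prevSpan r i0
      · exact prevSpan_subset_polySpan r i0 hprev
      have hmin := (hgen i0).2.2 s ⟨hsS, hprev⟩ hs0
      rw [vheight_eq_degree_Phi hn, vheight_eq_degree_Phi hn] at hmin
      have hmod : (Phi n s).natDegree % n = (Phi n (r i0)).natDegree % n :=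
        (congrArg Fin.val hi0).symm
      obtain ⟨c, d, hred⟩ := reduce_step hn (Phi n s) (Phi n (r i0))
        (Phi_ne_zero hn (hgen i0).1) hmin hmod
      set mm : Polynomial ℂ := C c * X ^ d with hmm
      set s' : Fin n → Polynomial ℂ := fun jj => s jj - mm * r i0 jj with hs'
      have hPhis' : Phi n s' = Phi n s - C c * X ^ (n * d) * Phi n (r i0) := by
        have : s' = s - fun jj => mm * r i0 jj := by funext jj; simp [hs']
        rw [this, Phi_sub, Phi_smul, hmm, expand_C_mul_X_pow]
      rw [← hPhis'] at hred
      have hs'S : s' ∈ S := hS _ hsS _ (hgen i0).2.1.1 mm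
      by_cases hs'0 : s' = 0
      · have : s = fun jj => mm * r i0 jj := by
          funext jj
          have h2 : s jj - mm * r i0 jj = 0 := by
            have := congrFun hs'0 jj
            simpa [hs'] using this
          exact sub_eq_zero.mp h2
        rw [this]
        exact polySpan_single_mem r i0 mm
      · have hlt : (Phi n s').natDegree < (Phi n s).natDegree :=
          natDegree_lt_natDegree (Phi_ne_zero hn hs'0) hred
        have hs'span : s' ∈ polySpan r :=
          IH (Phi n s').natDegree (by omega) s' hs'S le_rfl
        have : s = fun jj => s' jj + mm * r i0 jj := by
          funext jj; simp [hs']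
        rw [this]
        exact polySpan_add_mul_mem r i0 hs'span mm
  exact fun s hs => main (Phi n s).natDegree s hs le_rfl

lemma genSeq_unique_rep {n : ℕ} (hn : 0 < n) {S : Set (Fin n → Polynomial ℂ)}
    (hS : SClosed S) {r : Fin n → Fin n → Polynomial ℂ}
    (hgen : IsGenSeq S r) {c c' : Fin n → Polynomial ℂ}
    (h : (fun jj => ∑ i, c i * r i jj) = (fun jj => ∑ i, c' i * r i jj)) : c = c' := by
  classical
  by_contra hne
  obtain ⟨i1, hi1⟩ := Function.ne_iff.mp hne
  have hzero : (fun jj => ∑ i, (c i - c' i) * r i jj) = 0 := by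
    funext jj
    have hjj := congrFun h jj
    show (∑ i, (c i - c' i) * r i jj) = 0
    simp only [sub_mul, Finset.sum_sub_distrib]
    rw [hjj, sub_self]
  obtain ⟨-, -, -, hne0, -⟩ := span_sum_key hn r Finset.univ
    (fun i _ => (hgen i).1)
    (fun i _ i' _ hne' => by
      rcases lt_or_gt_of_ne hne' with hlt | hlt
      · exact distinct_res hn hS hlt (hgen i) (hgen i')
      · exact fun hv => (distinct_res hn hS hlt (hgen i') (hgen i)) hv.symm)
    (fun i => c i - c' i) i1 (Finset.mem_univ i1) (sub_ne_zero_of_ne hi1)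
  exact hne0 hzero

end Stmt7Aux

theorem stmt7
    (n N : ℕ) (hn : 0 < n) (hnN : n < N)
    (z : Fin N → ℂ) (α : Fin N → Fin n → ℂ)
    (hα_ne : ∀ k, α k ≠ 0)
    (hα_col : ∀ j : Fin n, ∃ k, α k j ≠ 0)
    (hα_li : ∀ w : ℂ,
      LinearIndependent ℂ (fun k : {k : Fin N // z k = w} => α k.val))
    :
    (∃ r : Fin n → Fin n → Polynomial ℂ, IsGenSeq (interpSet z α) r) ∧
    (∀ r : Fin n → Fin n → Polynomial ℂ, IsGenSeq (interpSet z α) r →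
      (∀ i j : Fin n, i ≠ j → ∀ a b : ℕ,
        vheight n (r i) = (a : WithBot ℕ) → vheight n (r j) = (b : WithBot ℕ) →
          a % n ≠ b % n) ∧
      (∀ s ∈ interpSet z α,
        ∃! c : Fin n → Polynomial ℂ, s = fun jj => ∑ i, c i * r i jj)) := by
  classical
  set S := interpSet z α with hSdef
  have hS : Stmt7Aux.SClosed S := by
    intro s hs t ht p
    simp only [hSdef, interpSet, Set.mem_setOf_eq] at hs ht ⊢
    intro k
    have key : ∀ j : Fin n, α k j * ((s j - p * t j).eval (z k))
        = α k j * (s j).eval (z k) - p.eval (z k) * (α k j * (t j).eval (z k)) := by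
      intro j; rw [eval_sub, eval_mul]; ring
    rw [Finset.sum_congr rfl (fun j _ => key j), Finset.sum_sub_distrib, hs k,
      ← Finset.mul_sum, ht k, mul_zero, sub_zero]
  set P : Polynomial ℂ := ∏ k : Fin N, (X - C (z k)) with hPdef
  have hP : P ≠ 0 := by
    rw [hPdef]
    apply Finset.prod_ne_zero_iff.mpr
    intro k _
    exact X_sub_C_ne_zero (z k)
  have hProot : ∀ k, P.eval (z k) = 0 := by
    intro k
    rw [hPdef, eval_prod]
    apply Finset.prod_eq_zero (Finset.mem_univ k)
    simp
  have hPS : ∀ i0 : Fin n, (fun jj => if jj = i0 then P else 0) ∈ S := by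
    intro i0
    simp only [hSdef, interpSet, Set.mem_setOf_eq]
    intro k
    apply Finset.sum_eq_zero
    intro j _
    by_cases hj : j = i0
    · rw [if_pos hj, hProot k, mul_zero]
    · rw [if_neg hj, eval_zero, mul_zero]
  constructor
  · exact Stmt7Aux.exists_genSeq hn hS P hP hPS
  · intro r hgen
    constructor
    · intro i j hij a b ha hb
      rw [Stmt7Aux.vheight_eq_degree_Phi hn] at ha hb
      have ha' : (Stmt7Aux.Phi n (r i)).natDegree = a := natDegree_eq_of_degree_eq_some ha
      have hb' : (Stmt7Aux.Phi n (r j)).natDegree = b := natDegree_eq_of_degree_eq_some hb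
      rw [← ha', ← hb']
      rcases lt_or_gt_of_ne hij with hlt | hlt
      · exact Stmt7Aux.distinct_res hn hS hlt (hgen i) (hgen j)
      · exact fun hv => (Stmt7Aux.distinct_res hn hS hlt (hgen j) (hgen i)) hv.symm
    · intro s hs
      obtain ⟨c, hc⟩ := Stmt7Aux.genSeq_spans hn hS hgen s hs
      refine ⟨c, hc, ?_⟩
      intro c' hc'
      exact Stmt7Aux.genSeq_unique_rep hn hS hgen (hc'.symm.trans hc)
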